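/- Let z* solve a(z*, h) = b(h) for all h ∈ H, where a is a continuous bilinear form on H and b a continuous linear form. Let r_1,…,r_m be the Riesz representers of a(·, z_1),…,a(·, z_m) for vectors z_1,…,z_m ∈ H, i.e. a(v, z_j) = ⟨r_j, v⟩ for all v ∈ H. Let P be the orthogonal projection onto a closed subspace V, and γ = sup_{h ∈ V⊥, ‖h‖=1} (Σ_j ⟨r_j, h⟩²)^{1/2}. Then Σ_{j=1}^m (b(z_j) − a(P(z*), z_j))² ≤ γ² dist(z*, V)². -/

import Mathlib

open scoped RealInnerProductSpace

/-- If `z*` solves `a(z*,h)=b(h)`, `r j` are Riesz representers of `a(·, z j)`,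
`P` the orthogonal projection onto a closed subspace `V`, and `γ` the sup of
`(∑ j ⟨r j, h⟩²)^{1/2}` over unit vectors `h ∈ Vᗮ`, then
`∑ j (b(z j) − a(P z*, z j))² ≤ γ² dist(z*, V)²`. -/
theorem stmt_4 {H : Type*} [NormedAddCommGroup H] [InnerProductSpace ℝ H] [CompleteSpace H]
    (a : H →L[ℝ] H →L[ℝ] ℝ) (b : H →L[ℝ] ℝ) (zstar : H)
    (hz : ∀ h : H, a zstar h = b h)
    (m : ℕ) (z : Fin m → H) (r : Fin m → H)
    (hr : ∀ j, ∀ v : H, ⟪r j, v⟫ = a v (z j))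
    (V : Submodule ℝ H) [CompleteSpace V]
    (γ : ℝ)
    (hγ : γ = sSup {x : ℝ | ∃ h ∈ Vᗮ, ‖h‖ = 1 ∧ x = Real.sqrt (∑ j, ⟪r j, h⟫ ^ 2)}) :
    (∑ j, (b (z j) - a ((V.orthogonalProjectionOnto zstar : H)) (z j)) ^ 2) ≤
      γ ^ 2 * Metric.infDist zstar (V : Set H) ^ 2 := by
  set e : H := zstar - (V.orthogonalProjectionOnto zstar : H) with he
  have hemem : e ∈ Vᗮ := V.sub_starProjection_mem_orthogonal zstar
  -- rewrite LHS as ∑ ⟪r j, e⟫²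
  have hL : ∀ j, b (z j) - a ((V.orthogonalProjectionOnto zstar : H)) (z j) = ⟪r j, e⟫ := by
    intro j
    rw [hr j e, he, map_sub]
    simp [hz (z j)]
  -- infDist equals ‖e‖
  have hdist : Metric.infDist zstar (V : Set H) = ‖e‖ := by
    rw [Metric.infDist_eq_iInf, he, ← Submodule.starProjection_apply, Submodule.starProjection_minimal]
    simp_rw [dist_eq_norm]
    rfl
  simp_rw [hL, hdist]
  -- bounded above
  have hbdd : BddAbove {x : ℝ | ∃ h ∈ Vᗮ, ‖h‖ = 1 ∧ x = Real.sqrt (∑ j, ⟪r j, h⟫ ^ 2)} := by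
    refine ⟨Real.sqrt (∑ j, ‖r j‖ ^ 2), ?_⟩
    rintro x ⟨h, -, hnorm, rfl⟩
    apply Real.sqrt_le_sqrt
    apply Finset.sum_le_sum
    intro j _
    have := abs_real_inner_le_norm (r j) h
    calc ⟪r j, h⟫ ^ 2 ≤ (‖r j‖ * ‖h‖) ^ 2 := by
          rw [← sq_abs ⟪r j, h⟫]
          exact pow_le_pow_left₀ (abs_nonneg _) this 2
      _ = ‖r j‖ ^ 2 := by rw [hnorm, mul_one]
  rcases eq_or_ne e 0 with h0 | h0
  · have hzero : (∑ j, ⟪r j, e⟫ ^ 2) = 0 := by simp [h0]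
    rw [hzero]
    positivity
  · have hne : ‖e‖ ≠ 0 := norm_ne_zero_iff.mpr h0
    set u : H := ‖e‖⁻¹ • e with hu
    have hunorm : ‖u‖ = 1 := by
      rw [hu, norm_smul, norm_inv, norm_norm, inv_mul_cancel₀ hne]
    have humem : u ∈ Vᗮ := Vᗮ.smul_mem _ hemem
    have hmem : Real.sqrt (∑ j, ⟪r j, u⟫ ^ 2) ∈
        {x : ℝ | ∃ h ∈ Vᗮ, ‖h‖ = 1 ∧ x = Real.sqrt (∑ j, ⟪r j, h⟫ ^ 2)} :=
      ⟨u, humem, hunorm, rfl⟩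
    have hle : Real.sqrt (∑ j, ⟪r j, u⟫ ^ 2) ≤ γ := hγ ▸ le_csSup hbdd hmem
    have hγ0 : 0 ≤ γ := le_trans (Real.sqrt_nonneg _) hle
    have hS : (∑ j, ⟪r j, u⟫ ^ 2) ≤ γ ^ 2 := by
      have := pow_le_pow_left₀ (Real.sqrt_nonneg _) hle 2
      rwa [Real.sq_sqrt (by positivity)] at this
    have key : (∑ j, ⟪r j, e⟫ ^ 2) = (∑ j, ⟪r j, u⟫ ^ 2) * ‖e‖ ^ 2 := by
      rw [Finset.sum_mul]
      refine Finset.sum_congr rfl fun j _ => ?_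
      rw [hu, real_inner_smul_right]
      field_simp
    rw [key]
    apply mul_le_mul_of_nonneg_right hS (by positivity)
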